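/- arXiv:1811.11331 — 3 statements merged into one kernel-verified Lean document; each statement's English description precedes it below -/
import Mathlib

section
/- With the topology control algorithm defined as follows—each vertex i connects to the maximum-index vertex of each connected component of the Gilbert graph induced on its lesser neighborhood N_i = {j < i : |x_i - x_j| ≤ R}—the resulting graph (V, A) is connected if and only if the Gilbert graph (V, g(V)) is connected. -/
noncomputable section

/-- The Gilbert graph on vertex set `Fin n`: `i ≠ j` are adjacent iff `dist (x i) (x j) ≤ R`. -/
def gilbert (n : ℕ) (x : Fin n → EuclideanSpace ℝ (Fin 2)) (R : ℝ) : SimpleGraph (Fin n) where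
  Adj i j := i ≠ j ∧ dist (x i) (x j) ≤ R
  symm := by
    constructor
    intro i j h
    exact ⟨h.1.symm, by rw [dist_comm]; exact h.2⟩
  loopless := by constructor; intro i h; exact h.1 rfl

/-- The lesser neighborhood `N_i = {j < i : dist (x i) (x j) ≤ R}`. -/
def lesserN (n : ℕ) (x : Fin n → EuclideanSpace ℝ (Fin 2)) (R : ℝ) (i : Fin n) : Set (Fin n) :=
  {j | j < i ∧ dist (x i) (x j) ≤ R}

/-- Vertex `i` initiates a connection to `j` iff `j` is the maximum-index vertex of its
connected component in the Gilbert graph induced on the lesser neighborhood `N_i`. -/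
def initiates (n : ℕ) (x : Fin n → EuclideanSpace ℝ (Fin 2)) (R : ℝ) (i j : Fin n) : Prop :=
  ∃ hj : j ∈ lesserN n x R i,
    ∀ k, ∀ hk : k ∈ lesserN n x R i,
      ((gilbert n x R).induce (lesserN n x R i)).Reachable ⟨j, hj⟩ ⟨k, hk⟩ → k ≤ j

/-- The topology produced by Algorithm 1: the symmetrization of the initiated connections. -/
def Agraph (n : ℕ) (x : Fin n → EuclideanSpace ℝ (Fin 2)) (R : ℝ) : SimpleGraph (Fin n) where
  Adj i j := initiates n x R i j ∨ initiates n x R j i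
  symm := ⟨fun i j h => Or.symm h⟩
  loopless := by
    constructor
    intro i h
    rcases h with ⟨hj, _⟩ | ⟨hj, _⟩ <;> exact absurd hj.1 (lt_irrefl i)

lemma A_le_g (n : ℕ) (x : Fin n → EuclideanSpace ℝ (Fin 2)) (R : ℝ) :
    Agraph n x R ≤ gilbert n x R := by
  intro i j h
  rcases h with ⟨⟨hlt, hd⟩, _⟩ | ⟨⟨hlt, hd⟩, _⟩
  · exact ⟨hlt.ne', hd⟩
  · exact ⟨hlt.ne, by rw [dist_comm]; exact hd⟩

lemma induced_reach_A (n : ℕ) (x : Fin n → EuclideanSpace ℝ (Fin 2)) (R : ℝ) (i : Fin n)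
    (IH : ∀ u : Fin n, u < i → ∀ v, (gilbert n x R).Adj u v → v < u →
      (Agraph n x R).Reachable u v) :
    ∀ a b : (lesserN n x R i),
      ((gilbert n x R).induce (lesserN n x R i)).Reachable a b →
      (Agraph n x R).Reachable (a : Fin n) (b : Fin n) := by
  intro a b hr
  obtain ⟨w⟩ := hr
  induction w with
  | nil => exact SimpleGraph.Reachable.refl _
  | @cons u v c h p ih =>
    refine SimpleGraph.Reachable.trans ?_ ih
    have hadj : (gilbert n x R).Adj (u : Fin n) (v : Fin n) := h
    rcases lt_or_gt_of_ne hadj.ne with hlt | hlt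
    · exact (IH (v : Fin n) v.2.1 (u : Fin n) hadj.symm hlt).symm
    · exact IH (u : Fin n) u.2.1 (v : Fin n) hadj hlt

lemma edge_reach (n : ℕ) (x : Fin n → EuclideanSpace ℝ (Fin 2)) (R : ℝ) :
    ∀ i j : Fin n, (gilbert n x R).Adj i j → j < i → (Agraph n x R).Reachable i j := by
  classical
  suffices H : ∀ N : ℕ, ∀ i : Fin n, i.val < N → ∀ j, (gilbert n x R).Adj i j → j < i →
      (Agraph n x R).Reachable i j by
    intro i j h1 h2; exact H (i.val + 1) i (Nat.lt_succ_self _) j h1 h2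
  intro N
  induction N with
  | zero => intro i hi; exact absurd hi (Nat.not_lt_zero _)
  | succ N IHN =>
    intro i hi j hadj hji
    have IH : ∀ u : Fin n, u < i → ∀ v, (gilbert n x R).Adj u v → v < u →
        (Agraph n x R).Reachable u v := by
      intro u hu v h1 h2
      exact IHN u (lt_of_lt_of_le hu (Nat.lt_succ_iff.mp hi)) v h1 h2
    have hj : j ∈ lesserN n x R i := ⟨hji, hadj.2⟩
    set s := lesserN n x R i with hs
    let T : Finset (Fin n) := Finset.univ.filter (fun k =>
      ∃ hk : k ∈ s, ((gilbert n x R).induce s).Reachable ⟨j, hj⟩ ⟨k, hk⟩)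
    have hjT : j ∈ T := by
      simp only [T, Finset.mem_filter, Finset.mem_univ, true_and]
      exact ⟨hj, SimpleGraph.Reachable.refl _⟩
    have hTne : T.Nonempty := ⟨j, hjT⟩
    set m := T.max' hTne with hmdef
    have hmT : m ∈ T := T.max'_mem hTne
    have hm' : ∃ hm : m ∈ s, ((gilbert n x R).induce s).Reachable ⟨j, hj⟩ ⟨m, hm⟩ := by
      simpa only [T, Finset.mem_filter, Finset.mem_univ, true_and] using hmT
    obtain ⟨hm, hreach⟩ := hm'
    have hinit : initiates n x R i m := by
      refine ⟨hm, fun k hk hr => ?_⟩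
      have hkT : k ∈ T := by
        simp only [T, Finset.mem_filter, Finset.mem_univ, true_and]
        exact ⟨hk, hreach.trans hr⟩
      exact T.le_max' k hkT
    have h1 : (Agraph n x R).Reachable i m := SimpleGraph.Adj.reachable (Or.inl hinit)
    have h2 : (Agraph n x R).Reachable m j :=
      induced_reach_A n x R i IH ⟨m, hm⟩ ⟨j, hj⟩ hreach.symm
    exact h1.trans h2

/-- The topology generated by Algorithm 1 is connected if and only if the Gilbert graph
is connected. -/
theorem Agraph_connected_iff_gilbert_connected
    (n : ℕ) (x : Fin n → EuclideanSpace ℝ (Fin 2)) (R : ℝ) (hR : 0 < R) :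
    (Agraph n x R).Connected ↔ (gilbert n x R).Connected := by
  constructor
  · exact fun h => h.mono (A_le_g n x R)
  · intro h
    have hne : Nonempty (Fin n) := h.nonempty
    refine SimpleGraph.Connected.mk fun u v => ?_
    obtain ⟨w⟩ := h.preconnected u v
    induction w with
    | nil => exact SimpleGraph.Reachable.refl _
    | @cons a b c hadj p ih =>
      refine SimpleGraph.Reachable.trans ?_ ih
      rcases lt_or_gt_of_ne hadj.ne with hlt | hlt
      · exact (edge_reach n x R b a hadj.symm hlt).symm
      · exact edge_reach n x R a b hadj hlt
end
end

section
/- With the topology control algorithm of Algorithm 1 (each vertex i connects to the maximum-index vertex of each connected component of the Gilbert graph induced on its lesser neighborhood), at most 5 vertices with index greater than i initiate a connection to vertex i; consequently, the degree of every vertex in the resulting graph (V, A) is at most 10. -/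
open Complex Real

noncomputable def toC (p : EuclideanSpace ℝ (Fin 2)) : ℂ := ⟨p 0, p 1⟩

lemma dist_toC (a b : EuclideanSpace ℝ (Fin 2)) : dist a b = ‖toC a - toC b‖ := by
  rw [EuclideanSpace.dist_eq, Complex.norm_def, Complex.normSq_apply]
  simp only [Fin.sum_univ_two, Real.dist_eq, sq_abs, toC, Complex.sub_re, Complex.sub_im]
  congr 1
  ring

lemma cos_lt_half {R : ℝ} {z w : ℂ} (hz : z ≠ 0) (hw : w ≠ 0)
    (hz' : ‖z‖ ≤ R) (hw' : ‖w‖ ≤ R)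
    (h : R < ‖z - w‖) : Real.cos (Complex.arg (w / z)) < 1/2 := by
  have hz0 : (0:ℝ) < ‖z‖ := norm_pos_iff.mpr hz
  have hw0 : (0:ℝ) < ‖w‖ := norm_pos_iff.mpr hw
  have hu : w / z ≠ 0 := div_ne_zero hw hz
  rw [Complex.cos_arg hu]
  have habs : ‖w / z‖ = ‖w‖ / ‖z‖ := norm_div _ _
  set a := ‖z‖ with ha
  set b := ‖w‖ with hb
  set c := (w/z).re with hc
  set s := (w/z).im with hs
  have hzw : z - w = z * (1 - w/z) := by field_simp
  have key : (‖z - w‖)^2 = a^2 * ((1-c)^2 + s^2) := by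
    rw [hzw, norm_mul, mul_pow]
    congr 1
    rw [Complex.sq_norm, Complex.normSq_apply]
    simp only [Complex.sub_re, Complex.sub_im, Complex.one_re, Complex.one_im, ← hc, ← hs]
    ring
  have hb2 : b^2 = a^2 * (c^2 + s^2) := by
    have h5 : (‖w/z‖)^2 = c^2 + s^2 := by
      rw [Complex.sq_norm, Complex.normSq_apply, ← hc, ← hs]; ring
    rw [← h5, habs, div_pow]
    field_simp
  have hRlt : R^2 < a^2 * ((1-c)^2 + s^2) := by
    have h0 := norm_nonneg (z - w)
    nlinarith [key]
  have h2 : 2*a^2*c < a^2 + b^2 - R^2 := by nlinarith [hRlt, hb2]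
  have h3 : a^2 + b^2 - R^2 ≤ a*b := by
    nlinarith [mul_nonneg (sub_nonneg.2 hz') (sub_nonneg.2 hw'), sq_nonneg (a-b),
      mul_le_mul_of_nonneg_right hz' hw0.le, mul_le_mul_of_nonneg_right hw' hz0.le]
  have h4 : 2*a*c < b := by nlinarith [h2, h3, ha]
  rw [habs]
  have : c / (b / a) = c * a / b := by field_simp
  rw [this, div_lt_iff₀ hw0]
  linarith

lemma abs_arg_gt {R : ℝ} {z w : ℂ} (hz : z ≠ 0) (hw : w ≠ 0)
    (hz' : ‖z‖ ≤ R) (hw' : ‖w‖ ≤ R)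
    (h : R < ‖z - w‖) : π/3 < |Complex.arg (w / z)| := by
  by_contra hle
  push_neg at hle
  have h1 : Real.cos (π/3) ≤ Real.cos |Complex.arg (w / z)| :=
    Real.cos_le_cos_of_nonneg_of_le_pi (abs_nonneg _) (by linarith [Real.pi_pos]) hle
  rw [Real.cos_abs, Real.cos_pi_div_three] at h1
  linarith [cos_lt_half hz hw hz' hw' h]

noncomputable def arcIdx (t : ℝ) : Fin 4 :=
  if t ≤ -2*π/3 then 0 else if t < 0 then 1 else if t ≤ 2*π/3 then 2 else 3

lemma arc_close {t t' : ℝ} (ht : t ∈ Set.Ioc (-π) π) (ht' : t' ∈ Set.Ioc (-π) π)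
    (h1 : π/3 < |t|) (h2 : π/3 < |t'|) (hidx : arcIdx t = arcIdx t') :
    |t - t'| < π/3 := by
  obtain ⟨ht1, ht2⟩ := ht
  obtain ⟨ht1', ht2'⟩ := ht'
  rcases lt_abs.1 h1 with ha | ha <;> rcases lt_abs.1 h2 with hb | hb <;>
    · unfold arcIdx at hidx
      split_ifs at hidx <;>
        first
          | exact absurd hidx (by decide)
          | (rw [abs_sub_lt_iff]; constructor <;> linarith)

lemma arg_div_eq {u u' : ℂ} (hu : u ≠ 0) (hu' : u' ≠ 0)
    (h : Complex.arg u' - Complex.arg u ∈ Set.Ioc (-π) π) :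
    Complex.arg (u' / u) = Complex.arg u' - Complex.arg u := by
  have h1 := Complex.arg_div_coe_angle hu' hu
  have h2 : ((Complex.arg (u'/u) : ℝ) : Real.Angle).toReal
      = ((Complex.arg u' - Complex.arg u : ℝ) : Real.Angle).toReal := by
    rw [h1, Real.Angle.coe_sub]
  rwa [Complex.arg_coe_angle_toReal_eq_arg,
    Real.Angle.toReal_coe_eq_self_iff_mem_Ioc.2 h] at h2

lemma packing {R : ℝ} (hR : 0 < R) (p : Fin 6 → ℂ)
    (hle : ∀ s, ‖p s‖ ≤ R)
    (hgt : ∀ s t, s ≠ t → R < ‖p s - p t‖) : False := by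
  have hpi := Real.pi_pos
  have hne : ∀ s, p s ≠ 0 := by
    intro s hps
    obtain ⟨t, ht⟩ := exists_ne s
    have h := hgt t s ht
    rw [hps, sub_zero] at h
    exact absurd (hle t) (not_le.2 h)
  set θ : Fin 5 → ℝ := fun j => Complex.arg (p j.succ / p 0) with hθ
  have hθIoc : ∀ j, θ j ∈ Set.Ioc (-π) π := fun j => Complex.arg_mem_Ioc _
  have hθgt : ∀ j, π/3 < |θ j| := fun j =>
    abs_arg_gt (hne 0) (hne j.succ) (hle 0) (hle j.succ)
      (hgt 0 j.succ (Fin.succ_ne_zero j).symm)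
  obtain ⟨j, j', hjj', hidx⟩ :=
    Fintype.exists_ne_map_eq_of_card_lt (fun j => arcIdx (θ j)) (by simp)
  have hclose : |θ j' - θ j| < π/3 :=
    arc_close (hθIoc j') (hθIoc j) (hθgt j') (hθgt j) (hidx.symm)
  have hd : Complex.arg ((p j'.succ / p 0) / (p j.succ / p 0)) = θ j' - θ j := by
    apply arg_div_eq (div_ne_zero (hne j.succ) (hne 0)) (div_ne_zero (hne j'.succ) (hne 0))
    constructor
    · rcases abs_lt.1 hclose with ⟨h1, _⟩; linarith
    · rcases abs_lt.1 hclose with ⟨_, h2⟩; linarith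
  have heq : (p j'.succ / p 0) / (p j.succ / p 0) = p j'.succ / p j.succ := by
    rw [div_div_div_comm, div_self (hne 0), div_one]
  have hgt2 : π/3 < |Complex.arg (p j'.succ / p j.succ)| :=
    abs_arg_gt (hne j.succ) (hne j'.succ) (hle j.succ) (hle j'.succ)
      (hgt j.succ j'.succ (fun he => hjj' (Fin.succ_injective _ he)))
  rw [← heq, hd] at hgt2
  linarith [lt_of_lt_of_le hgt2 (le_of_lt hclose)]

lemma card_le_five {α : Type*} [Finite α] {R : ℝ} (hR : 0 < R) (p : α → ℂ)
    (hle : ∀ s, ‖p s‖ ≤ R)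
    (hgt : ∀ s t : α, s ≠ t → R < ‖p s - p t‖) : Nat.card α ≤ 5 := by
  by_contra h
  push_neg at h
  cases nonempty_fintype α
  rw [Nat.card_eq_fintype_card] at h
  obtain ⟨f⟩ : Nonempty (Fin 6 ↪ α) := Function.Embedding.nonempty_of_card_le
    (by rw [Fintype.card_fin]; omega)
  exact packing hR (p ∘ f) (fun s => hle _)
    (fun s t hst => hgt _ _ (fun he => hst (f.injective he)))

noncomputable section


lemma key_lt {n : ℕ} {x : Fin n → EuclideanSpace ℝ (Fin 2)} {R : ℝ} {i k k' : Fin n}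
    (hik : i < k) (hki : initiates n x R k i) (hk'i : initiates n x R k' i)
    (hlt : k < k') (hd : dist (x k) (x k') ≤ R) : False := by
  obtain ⟨⟨_, hdki⟩, _⟩ := hki
  obtain ⟨hi_mem, hmax⟩ := hk'i
  have hk_mem : k ∈ lesserN n x R k' := ⟨hlt, by rwa [dist_comm] at hd⟩
  have hadj : ((gilbert n x R).induce (lesserN n x R k')).Adj ⟨i, hi_mem⟩ ⟨k, hk_mem⟩ :=
    ⟨ne_of_lt hik, by rwa [dist_comm] at hdki⟩
  exact absurd (hmax k hk_mem hadj.reachable) (not_le.2 hik)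

theorem claimA (n : ℕ) (x : Fin n → EuclideanSpace ℝ (Fin 2)) (R : ℝ) (hR : 0 < R) (i : Fin n) :
    Nat.card {k : Fin n // i < k ∧ initiates n x R k i} ≤ 5 := by
  apply card_le_five hR (fun k => toC (x k.1) - toC (x i))
  · rintro ⟨k, hik, ⟨⟨_, hdki⟩, _⟩⟩
    rw [← dist_toC]
    exact hdki
  · rintro s t hst
    rw [sub_sub_sub_cancel_right, ← dist_toC]
    by_contra hd
    push_neg at hd
    have hne : s.1 ≠ t.1 := fun he => hst (Subtype.ext he)
    rcases lt_or_gt_of_ne hne with hlt | hlt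
    · exact key_lt s.2.1 s.2.2 t.2.2 hlt hd
    · exact key_lt t.2.1 t.2.2 s.2.2 hlt (by rwa [dist_comm] at hd)

theorem claimB (n : ℕ) (x : Fin n → EuclideanSpace ℝ (Fin 2)) (R : ℝ) (hR : 0 < R) (i : Fin n) :
    Nat.card {j : Fin n // initiates n x R i j} ≤ 5 := by
  apply card_le_five hR (fun j => toC (x j.1) - toC (x i))
  · rintro ⟨j, ⟨⟨_, hdij⟩, _⟩⟩
    rw [← dist_toC, dist_comm]
    exact hdij
  · rintro ⟨j, hj_mem, hjmax⟩ ⟨j', hj'_mem, hj'max⟩ hst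
    rw [sub_sub_sub_cancel_right, ← dist_toC]
    by_contra hd
    push_neg at hd
    have hne : j ≠ j' := fun he => hst (Subtype.ext he)
    have hadj : ((gilbert n x R).induce (lesserN n x R i)).Adj ⟨j, hj_mem⟩ ⟨j', hj'_mem⟩ :=
      ⟨hne, hd⟩
    exact hne (le_antisymm (hj'max j hj_mem hadj.symm.reachable)
      (hjmax j' hj'_mem hadj.reachable))

/-- At most 5 vertices of index greater than `i` initiate a connection to `i`;
consequently every vertex of the topology generated by Algorithm 1 has degree at most 10. -/
theorem Agraph_degree_le_ten
    (n : ℕ) (x : Fin n → EuclideanSpace ℝ (Fin 2)) (R : ℝ) (hR : 0 < R) (i : Fin n) :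
    Nat.card {k : Fin n // i < k ∧ initiates n x R k i} ≤ 5 ∧
    Nat.card ((Agraph n x R).neighborSet i) ≤ 10 := by
  refine ⟨claimA n x R hR i, ?_⟩
  set S1 : Set (Fin n) := {j | initiates n x R i j} with hS1
  set S2 : Set (Fin n) := {j | initiates n x R j i} with hS2
  have hsub : (Agraph n x R).neighborSet i ⊆ S1 ∪ S2 := fun j hj => hj
  have hc1 : Nat.card S1 ≤ 5 := by
    have := claimB n x R hR i
    exact le_trans (le_of_eq (Nat.card_congr
      ⟨fun a => ⟨a.1, a.2⟩, fun a => ⟨a.1, a.2⟩, fun _ => rfl, fun _ => rfl⟩)) this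
  have hc2 : Nat.card S2 ≤ 5 := by
    have := claimA n x R hR i
    refine le_trans (le_of_eq (Nat.card_congr ?_)) this
    exact ⟨fun a => ⟨a.1, a.2.choose.1, a.2⟩, fun a => ⟨a.1, a.2.2⟩,
      fun _ => rfl, fun _ => rfl⟩
  calc Nat.card ((Agraph n x R).neighborSet i)
      = ((Agraph n x R).neighborSet i).ncard := (Nat.card_coe_set_eq _)
    _ ≤ (S1 ∪ S2).ncard := Set.ncard_le_ncard hsub (Set.toFinite _)
    _ ≤ S1.ncard + S2.ncard := Set.ncard_union_le _ _
    _ ≤ 5 + 5 := by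
        rw [← Nat.card_coe_set_eq, ← Nat.card_coe_set_eq]
        exact Nat.add_le_add hc1 hc2
    _ = 10 := rfl
end
end

section
/- Under Algorithm 2 with parameter δ ≥ 1, for every vertex i, the degree of i in the final topology is at least min{deg_G(i), δ}, where deg_G(i) is the degree of i in the Gilbert graph. In particular, if the Gilbert graph has minimum degree δ, the final topology has minimum degree at least δ. -/
noncomputable section

attribute [local instance] Classical.propDecidable

/-- The lesser neighbors of `i`, as a finset. -/
def lesserF (n : ℕ) (x : Fin n → EuclideanSpace ℝ (Fin 2)) (R : ℝ) (i : Fin n) :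
    Finset (Fin n) :=
  Finset.univ.filter (fun j => j < i ∧ dist (x i) (x j) ≤ R)

/-- The greater neighbors of `i`, as a finset. -/
def greaterF (n : ℕ) (x : Fin n → EuclideanSpace ℝ (Fin 2)) (R : ℝ) (i : Fin n) :
    Finset (Fin n) :=
  Finset.univ.filter (fun j => i < j ∧ dist (x i) (x j) ≤ R)

/-- The connections initiated in Line 1 of Algorithm 2 (those of Algorithm 1):
the maximum-index vertex of each component of the Gilbert graph induced on `N_i`. -/
def MsetF (n : ℕ) (x : Fin n → EuclideanSpace ℝ (Fin 2)) (R : ℝ) (i : Fin n) :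
    Finset (Fin n) :=
  Finset.univ.filter (fun j => initiates n x R i j)

/-- Greedy phase adding `max (pool \ C)` while `|C| < δ` and `pool \ C ≠ ∅`
(Lines 2–3 of Algorithm 2), with explicit fuel. -/
def phaseMax {n : ℕ} (δ : ℕ) (pool : Finset (Fin n)) :
    ℕ → Finset (Fin n) → Finset (Fin n)
  | 0, C => C
  | fuel + 1, C =>
    if h : C.card < δ ∧ (pool \ C).Nonempty then
      phaseMax δ pool fuel (insert ((pool \ C).max' h.2) C)
    else C

/-- Greedy phase adding `min (pool \ C)` while `|C| < δ` and `pool \ C ≠ ∅`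
(Lines 4–5 of Algorithm 2), with explicit fuel. -/
def phaseMin {n : ℕ} (δ : ℕ) (pool : Finset (Fin n)) :
    ℕ → Finset (Fin n) → Finset (Fin n)
  | 0, C => C
  | fuel + 1, C =>
    if h : C.card < δ ∧ (pool \ C).Nonempty then
      phaseMin δ pool fuel (insert ((pool \ C).min' h.2) C)
    else C

/-- The set `C_i` of connections initiated by vertex `i` under Algorithm 2. -/
def Cset (n : ℕ) (x : Fin n → EuclideanSpace ℝ (Fin 2)) (R : ℝ) (δ : ℕ) (i : Fin n) :
    Finset (Fin n) :=
  phaseMin δ (greaterF n x R i) n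
    (phaseMax δ (lesserF n x R i) n (MsetF n x R i))

/-- The final topology of Algorithm 2: edge `(i,j)` present iff `j ∈ C_i` or `i ∈ C_j`. -/
def topo2 (n : ℕ) (x : Fin n → EuclideanSpace ℝ (Fin 2)) (R : ℝ) (δ : ℕ) :
    SimpleGraph (Fin n) where
  Adj i j := i ≠ j ∧ (j ∈ Cset n x R δ i ∨ i ∈ Cset n x R δ j)
  symm := ⟨fun i j h => ⟨h.1.symm, Or.symm h.2⟩⟩
  loopless := ⟨fun i h => h.1 rfl⟩

lemma phaseMax_subset {n : ℕ} (δ : ℕ) (pool : Finset (Fin n)) :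
    ∀ fuel C, C ⊆ phaseMax δ pool fuel C := by
  intro fuel
  induction fuel with
  | zero => intro C; simp [phaseMax]
  | succ f ih =>
    intro C
    rw [phaseMax]
    split
    · exact (Finset.subset_insert _ _).trans (ih _)
    · exact Finset.Subset.refl _

lemma phaseMax_subset_union {n : ℕ} (δ : ℕ) (pool : Finset (Fin n)) :
    ∀ fuel C, phaseMax δ pool fuel C ⊆ C ∪ pool := by
  intro fuel
  induction fuel with
  | zero => intro C; simp [phaseMax]
  | succ f ih =>
    intro C
    rw [phaseMax]
    split
    · rename_i h
      refine (ih _).trans ?_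
      intro a ha
      rcases Finset.mem_union.1 ha with ha | ha
      · rcases Finset.mem_insert.1 ha with rfl | ha
        · exact Finset.mem_union_right _ (Finset.mem_sdiff.1 ((pool \ C).max'_mem h.2)).1
        · exact Finset.mem_union_left _ ha
      · exact Finset.mem_union_right _ ha
    · exact Finset.subset_union_left

lemma phaseMax_spec {n : ℕ} (δ : ℕ) (pool : Finset (Fin n)) :
    ∀ fuel C, (pool \ C).card ≤ fuel →
      δ ≤ (phaseMax δ pool fuel C).card ∨ pool ⊆ phaseMax δ pool fuel C := by
  intro fuel
  induction fuel with
  | zero =>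
    intro C hc
    right
    rw [phaseMax]
    intro a ha
    by_contra hac
    have : a ∈ pool \ C := Finset.mem_sdiff.2 ⟨ha, hac⟩
    simp [Finset.card_eq_zero.1 (Nat.le_zero.1 hc)] at this
  | succ f ih =>
    intro C hc
    rw [phaseMax]
    split
    · rename_i h
      apply ih
      have hm := (pool \ C).max'_mem h.2
      have : pool \ insert ((pool \ C).max' h.2) C = (pool \ C).erase ((pool \ C).max' h.2) := by
        ext a; simp [Finset.mem_sdiff, Finset.mem_erase, and_comm, not_or]; tauto
      rw [this, Finset.card_erase_of_mem hm]
      omega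
    · rename_i h
      push_neg at h
      rcases Nat.lt_or_ge C.card δ with h1 | h1
      · right
        have hemp := h h1
        intro a ha
        by_contra hac
        exact absurd (Finset.mem_sdiff.2 ⟨ha, hac⟩) (by rw [hemp]; simp)
      · exact Or.inl h1

lemma phaseMin_subset {n : ℕ} (δ : ℕ) (pool : Finset (Fin n)) :
    ∀ fuel C, C ⊆ phaseMin δ pool fuel C := by
  intro fuel
  induction fuel with
  | zero => intro C; simp [phaseMin]
  | succ f ih =>
    intro C
    rw [phaseMin]
    split
    · exact (Finset.subset_insert _ _).trans (ih _)
    · exact Finset.Subset.refl _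

lemma phaseMin_subset_union {n : ℕ} (δ : ℕ) (pool : Finset (Fin n)) :
    ∀ fuel C, phaseMin δ pool fuel C ⊆ C ∪ pool := by
  intro fuel
  induction fuel with
  | zero => intro C; simp [phaseMin]
  | succ f ih =>
    intro C
    rw [phaseMin]
    split
    · rename_i h
      refine (ih _).trans ?_
      intro a ha
      rcases Finset.mem_union.1 ha with ha | ha
      · rcases Finset.mem_insert.1 ha with rfl | ha
        · exact Finset.mem_union_right _ (Finset.mem_sdiff.1 ((pool \ C).min'_mem h.2)).1
        · exact Finset.mem_union_left _ ha
      · exact Finset.mem_union_right _ ha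
    · exact Finset.subset_union_left

lemma phaseMin_spec {n : ℕ} (δ : ℕ) (pool : Finset (Fin n)) :
    ∀ fuel C, (pool \ C).card ≤ fuel →
      δ ≤ (phaseMin δ pool fuel C).card ∨ pool ⊆ phaseMin δ pool fuel C := by
  intro fuel
  induction fuel with
  | zero =>
    intro C hc
    right
    rw [phaseMin]
    intro a ha
    by_contra hac
    have : a ∈ pool \ C := Finset.mem_sdiff.2 ⟨ha, hac⟩
    simp [Finset.card_eq_zero.1 (Nat.le_zero.1 hc)] at this
  | succ f ih =>
    intro C hc
    rw [phaseMin]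
    split
    · rename_i h
      apply ih
      have hm := (pool \ C).min'_mem h.2
      have : pool \ insert ((pool \ C).min' h.2) C = (pool \ C).erase ((pool \ C).min' h.2) := by
        ext a; simp [Finset.mem_sdiff, Finset.mem_erase, and_comm, not_or]; tauto
      rw [this, Finset.card_erase_of_mem hm]
      omega
    · rename_i h
      push_neg at h
      rcases Nat.lt_or_ge C.card δ with h1 | h1
      · right
        have hemp := h h1
        intro a ha
        by_contra hac
        exact absurd (Finset.mem_sdiff.2 ⟨ha, hac⟩) (by rw [hemp]; simp)
      · exact Or.inl h1

/-- Under Algorithm 2, every vertex has degree at least `min (deg_G i) δ` in the final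
topology, where `deg_G i` is its degree in the Gilbert graph. -/
theorem topo2_degree_lower_bound
    (n : ℕ) (x : Fin n → EuclideanSpace ℝ (Fin 2)) (R : ℝ) (hR : 0 < R)
    (δ : ℕ) (hδ : 1 ≤ δ) (i : Fin n) :
    min (Nat.card ((gilbert n x R).neighborSet i)) δ ≤
      Nat.card ((topo2 n x R δ).neighborSet i) := by
  classical
  set L := lesserF n x R i with hLdef
  set Gr := greaterF n x R i with hGdef
  set A := phaseMax δ L n (MsetF n x R i) with hAdef
  have hC : Cset n x R δ i = phaseMin δ Gr n A := rfl
  -- M ⊆ L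
  have hML : MsetF n x R i ⊆ L := by
    intro j hj
    simp only [MsetF, Finset.mem_filter, Finset.mem_univ, true_and] at hj
    obtain ⟨⟨h1, h2⟩, -⟩ := hj
    simp [hLdef, lesserF, h1, h2]
  have hAL : A ⊆ L := by
    intro j hj
    rcases Finset.mem_union.1 (phaseMax_subset_union δ L n (MsetF n x R i) hj) with h | h
    · exact hML h
    · exact h
  have hCsub : Cset n x R δ i ⊆ L ∪ Gr := by
    intro j hj
    rw [hC] at hj
    rcases Finset.mem_union.1 (phaseMin_subset_union δ Gr n A hj) with h | h
    · exact Finset.mem_union_left _ (hAL h)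
    · exact Finset.mem_union_right _ h
  have hn : ∀ F : Finset (Fin n), F.card ≤ n := fun F => by
    simpa using Finset.card_le_univ F
  have hspec1 := phaseMax_spec δ L n (MsetF n x R i)
    (le_trans (Finset.card_le_card Finset.sdiff_subset) (hn L))
  have hspec2 := phaseMin_spec δ Gr n A
    (le_trans (Finset.card_le_card Finset.sdiff_subset) (hn Gr))
  -- the Gilbert neighbor set as a finset
  have hNG : (gilbert n x R).neighborSet i = ↑(L ∪ Gr) := by
    ext j
    simp only [SimpleGraph.mem_neighborSet, gilbert, hLdef, hGdef, lesserF, greaterF,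
      Finset.coe_union, Set.mem_union, Finset.coe_filter, Finset.mem_univ, true_and,
      Set.mem_setOf_eq]
    constructor
    · rintro ⟨hne, hd⟩
      rcases (Ne.lt_or_gt hne) with h | h
      · exact Or.inr ⟨h, hd⟩
      · exact Or.inl ⟨h, hd⟩
    · rintro (⟨h, hd⟩ | ⟨h, hd⟩)
      · exact ⟨h.ne', hd⟩
      · exact ⟨h.ne, hd⟩
  have hcardG : Nat.card ((gilbert n x R).neighborSet i) = (L ∪ Gr).card := by
    rw [hNG, Nat.card_coe_set_eq, Set.ncard_coe_finset]
  -- C ⊆ topo2 neighborhood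
  have hCnbr : ↑(Cset n x R δ i) ⊆ (topo2 n x R δ).neighborSet i := by
    intro j hj
    have hj' : j ∈ Cset n x R δ i := hj
    have hne : i ≠ j := by
      rcases Finset.mem_union.1 (hCsub hj') with h | h
      · simp only [hLdef, lesserF, Finset.mem_filter] at h
        exact h.2.1.ne'
      · simp only [hGdef, greaterF, Finset.mem_filter] at h
        exact h.2.1.ne
    exact (⟨hne, Or.inl hj'⟩ : i ≠ j ∧ _)
  have hle : (Cset n x R δ i).card ≤ Nat.card ((topo2 n x R δ).neighborSet i) := by
    rw [Nat.card_coe_set_eq]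
    calc (Cset n x R δ i).card = (↑(Cset n x R δ i) : Set (Fin n)).ncard :=
          (Set.ncard_coe_finset _).symm
      _ ≤ _ := Set.ncard_le_ncard hCnbr (Set.toFinite _)
  rcases hspec2 with h | hGC
  · exact le_trans (min_le_right _ _) ((hC ▸ h : δ ≤ (Cset n x R δ i).card).trans hle)
  · rcases hspec1 with h | hLA
    · have : δ ≤ (Cset n x R δ i).card := by
        rw [hC]
        exact le_trans h (Finset.card_le_card (phaseMin_subset δ Gr n A))
      exact le_trans (min_le_right _ _) (this.trans hle)
    · have hsub : L ∪ Gr ⊆ Cset n x R δ i := by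
        rw [hC]
        exact Finset.union_subset (hLA.trans (phaseMin_subset δ Gr n A)) hGC
      refine le_trans (min_le_left _ _) ?_
      rw [hcardG]
      exact (Finset.card_le_card hsub).trans hle
end
end
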